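/- For every admissible path p ∈ P_{a,b}, the crystal energy satisfies h(p) = (1/2) · Σ_{s≥1} s·|r_p(s+2) − r_p(s)|, where the sum has finitely many nonzero terms. -/
import Mathlib


namespace Stmt2

/-- The ground-state path value `\bar p(s; a, b)`. -/
def barp (m n a b : ℤ) (s : ℕ) : ℤ :=
  if s % 2 = 1 then n - b else if s % 4 = 0 then a + b else m - n - a + b

/-- Membership in the path space `P_{a,b}`. -/
def IsPath (m n a b : ℤ) (p : ℕ → ℤ) : Prop :=
  (∀ s : ℕ, 1 ≤ s → 0 ≤ p s ∧ p s ≤ (if s % 2 = 1 then n else m)) ∧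
  ∃ S : ℕ, ∀ s ≥ S, p s = barp m n a b s

/-- The eventual (ground-state) weight sequence `ā(s)`. -/
def abar (m n a b : ℤ) (s : ℕ) : ℤ :=
  if s % 4 = 1 then a + b
  else if s % 4 = 2 then n + a - b
  else if s % 4 = 3 then m - n - a + b
  else m - a - b

/-- `A` is the weight sequence `a_p` attached to the path `p`. -/
def IsWeightSeq (m n a b : ℤ) (p A : ℕ → ℤ) : Prop :=
  (∀ s : ℕ, 1 ≤ s → A s = A (s + 1) + (if s % 2 = 1 then n else m) - 2 * p s) ∧
  ∃ S : ℕ, ∀ s ≥ S, A s = abar m n a b s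

/-- The admissibility inequalities for the weight sequence `A = a_p`. -/
def AdmIneq (m n : ℤ) (p A : ℕ → ℤ) : Prop :=
  ∀ s : ℕ, 1 ≤ s →
    p s ≤ A (s + 1) ∧ (if s % 2 = 1 then n else m) - p s ≤ m - A (s + 1)

/-- `{a}_b` : `a` if `a ≤ b`, and `2b - a` if `a ≥ b`. -/
def curly (x c : ℤ) : ℤ := if x ≤ c then x else 2 * c - x

def h1 (m n i j k : ℤ) : ℤ :=
  if i + j ≤ min m n then curly (k + j) n
  else if m ≤ i + j ∧ i + j ≤ n then curly (k + i + 2 * j - m) n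
  else if n ≤ i + j ∧ i + j ≤ m then curly (k + n - i) n
  else curly (k + n - m + j) n

def h2 (m n i j k : ℤ) : ℤ :=
  if j + k ≤ min m n then curly (i + j) m
  else if m ≤ j + k ∧ j + k ≤ n then curly (i + m - k) m
  else if n ≤ j + k ∧ j + k ≤ m then curly (i + k + 2 * j - n) m
  else curly (i + j + m - n) m

def h3 (m n i j : ℤ) : ℤ :=
  if i + j ≤ min m n then i + j
  else if m ≤ i + j ∧ i + j ≤ n then m
  else if n ≤ i + j ∧ i + j ≤ m then n
  else m + n - i - j

/-- The `s`-th term in the sum defining the crystal energy. -/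
def eterm (m n a b : ℤ) (p : ℕ → ℤ) (s : ℕ) : ℤ :=
  (h1 m n (p (2 * s + 1)) (p (2 * s)) (p (2 * s - 1))
    - h1 m n (barp m n a b (2 * s + 1)) (barp m n a b (2 * s)) (barp m n a b (2 * s - 1)))
  + (h2 m n (p (2 * s + 2)) (p (2 * s + 1)) (p (2 * s))
    - h2 m n (barp m n a b (2 * s + 2)) (barp m n a b (2 * s + 1)) (barp m n a b (2 * s)))
  + 2 * (h3 m n (p (2 * s + 1)) (p (2 * s))
    - h3 m n (barp m n a b (2 * s + 1)) (barp m n a b (2 * s)))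

/-- `H` is the crystal energy `h(p)`; the sum has finitely many nonzero terms, so the
partial sums are eventually constant. -/
def IsEnergy (m n a b : ℤ) (p : ℕ → ℤ) (H : ℤ) : Prop :=
  ∃ S0 : ℕ, ∀ S ≥ S0, H = -∑ s ∈ Finset.Icc 1 S, (s : ℤ) * eterm m n a b p s

/-- The RSOS path `r_p` read off from the weight sequence `A = a_p`. -/
def rOf (m : ℤ) (A : ℕ → ℤ) (s : ℕ) : ℤ :=
  if s % 2 = 1 then A (2 * s - 1) else m - A (2 * s - 1)

lemma core (m n : ℤ) (hmn : n < m) (hn : 1 ≤ n)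
    (p1 p2 p3 p4 x1 x2 x3 x4 x5 : ℤ)
    (hp1 : 0 ≤ p1) (hp1' : p1 ≤ n) (hp2 : 0 ≤ p2) (hp2' : p2 ≤ m)
    (hp3 : 0 ≤ p3) (hp3' : p3 ≤ n) (hp4 : 0 ≤ p4) (hp4' : p4 ≤ m)
    (e1 : x1 = x2 + n - 2*p1) (e2 : x2 = x3 + m - 2*p2)
    (e3 : x3 = x4 + n - 2*p3) (e4 : x4 = x5 + m - 2*p4)
    (a1 : p1 ≤ x2) (a1' : n - p1 ≤ m - x2)
    (a2 : p2 ≤ x3) (a2' : m - p2 ≤ m - x3)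
    (a3 : p3 ≤ x4) (a3' : n - p3 ≤ m - x4)
    (a4 : p4 ≤ x5) (a4' : m - p4 ≤ m - x5) :
    |x5 - x1| = 2*(m+3*n) - 2 * h1 m n p3 p2 p1 - 2 * h2 m n p4 p3 p2 - 4 * h3 m n p3 p2 := by
  rcases le_total x1 x5 with h | h
  · rw [abs_of_nonneg (by omega : (0:ℤ) ≤ x5 - x1)]
    unfold h1 h2 h3 curly; split_ifs <;> omega
  · rw [abs_of_nonpos (by omega : x5 - x1 ≤ 0)]
    unfold h1 h2 h3 curly; split_ifs <;> omega

lemma bar1a (m n a b : ℤ) (hmn : n < m) (hn : 1 ≤ n)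
    (ha0 : 0 ≤ a) (ha1 : a ≤ m - n) (hb0 : 0 ≤ b) (hb1 : b ≤ n) :
    h1 m n (n-b) (m-n-a+b) (n-b) = n := by
  unfold h1 curly; split_ifs <;> omega

lemma bar2a (m n a b : ℤ) (hmn : n < m) (hn : 1 ≤ n)
    (ha0 : 0 ≤ a) (ha1 : a ≤ m - n) (hb0 : 0 ≤ b) (hb1 : b ≤ n) :
    h2 m n (a+b) (n-b) (m-n-a+b) = m := by
  unfold h2 curly; split_ifs <;> omega

lemma bar3a (m n a b : ℤ) (hmn : n < m) (hn : 1 ≤ n)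
    (ha0 : 0 ≤ a) (ha1 : a ≤ m - n) (hb0 : 0 ≤ b) (hb1 : b ≤ n) :
    h3 m n (n-b) (m-n-a+b) = n := by
  unfold h3; split_ifs <;> omega

lemma bar1b (m n a b : ℤ) (hmn : n < m) (hn : 1 ≤ n)
    (ha0 : 0 ≤ a) (ha1 : a ≤ m - n) (hb0 : 0 ≤ b) (hb1 : b ≤ n) :
    h1 m n (n-b) (a+b) (n-b) = n := by
  unfold h1 curly; split_ifs <;> omega

lemma bar2b (m n a b : ℤ) (hmn : n < m) (hn : 1 ≤ n)
    (ha0 : 0 ≤ a) (ha1 : a ≤ m - n) (hb0 : 0 ≤ b) (hb1 : b ≤ n) :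
    h2 m n (m-n-a+b) (n-b) (a+b) = m := by
  unfold h2 curly; split_ifs <;> omega

lemma bar3b (m n a b : ℤ) (hmn : n < m) (hn : 1 ≤ n)
    (ha0 : 0 ≤ a) (ha1 : a ≤ m - n) (hb0 : 0 ≤ b) (hb1 : b ≤ n) :
    h3 m n (n-b) (a+b) = n := by
  unfold h3; split_ifs <;> omega


lemma key (m n a b : ℤ) (hmn : n < m) (hn : 1 ≤ n)
    (ha0 : 0 ≤ a) (ha1 : a ≤ m - n) (hb0 : 0 ≤ b) (hb1 : b ≤ n)
    (p A : ℕ → ℤ)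
    (hp : ∀ t : ℕ, 1 ≤ t → 0 ≤ p t ∧ p t ≤ (if t % 2 = 1 then n else m))
    (hA : ∀ t : ℕ, 1 ≤ t → A t = A (t + 1) + (if t % 2 = 1 then n else m) - 2 * p t)
    (hadm : AdmIneq m n p A) (s : ℕ) (hs : 1 ≤ s) :
    |rOf m A (s + 2) - rOf m A s| = -2 * eterm m n a b p s := by
  obtain ⟨k, rfl⟩ : ∃ k, s = k + 1 := ⟨s - 1, by omega⟩
  obtain ⟨q1, q1'⟩ := hp (2*k+1) (by omega)
  obtain ⟨q2, q2'⟩ := hp (2*k+2) (by omega)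
  obtain ⟨q3, q3'⟩ := hp (2*k+3) (by omega)
  obtain ⟨q4, q4'⟩ := hp (2*k+4) (by omega)
  rw [if_pos (show (2*k+1) % 2 = 1 by omega)] at q1'
  rw [if_neg (show ¬ (2*k+2) % 2 = 1 by omega)] at q2'
  rw [if_pos (show (2*k+3) % 2 = 1 by omega)] at q3'
  rw [if_neg (show ¬ (2*k+4) % 2 = 1 by omega)] at q4'
  have r1 := hA (2*k+1) (by omega)
  have r2 := hA (2*k+2) (by omega)
  have r3 := hA (2*k+3) (by omega)
  have r4 := hA (2*k+4) (by omega)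
  rw [if_pos (show (2*k+1) % 2 = 1 by omega),
      show (2*k+1+1 : ℕ) = 2*k+2 by omega] at r1
  rw [if_neg (show ¬ (2*k+2) % 2 = 1 by omega),
      show (2*k+2+1 : ℕ) = 2*k+3 by omega] at r2
  rw [if_pos (show (2*k+3) % 2 = 1 by omega),
      show (2*k+3+1 : ℕ) = 2*k+4 by omega] at r3
  rw [if_neg (show ¬ (2*k+4) % 2 = 1 by omega),
      show (2*k+4+1 : ℕ) = 2*k+5 by omega] at r4
  obtain ⟨d1, d1'⟩ := hadm (2*k+1) (by omega)
  obtain ⟨d2, d2'⟩ := hadm (2*k+2) (by omega)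
  obtain ⟨d3, d3'⟩ := hadm (2*k+3) (by omega)
  obtain ⟨d4, d4'⟩ := hadm (2*k+4) (by omega)
  rw [show (2*k+1+1 : ℕ) = 2*k+2 by omega] at d1
  rw [show (2*k+2+1 : ℕ) = 2*k+3 by omega] at d2
  rw [show (2*k+3+1 : ℕ) = 2*k+4 by omega] at d3
  rw [show (2*k+4+1 : ℕ) = 2*k+5 by omega] at d4
  rw [if_pos (show (2*k+1) % 2 = 1 by omega),
      show (2*k+1+1 : ℕ) = 2*k+2 by omega] at d1'
  rw [if_neg (show ¬ (2*k+2) % 2 = 1 by omega),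
      show (2*k+2+1 : ℕ) = 2*k+3 by omega] at d2'
  rw [if_pos (show (2*k+3) % 2 = 1 by omega),
      show (2*k+3+1 : ℕ) = 2*k+4 by omega] at d3'
  rw [if_neg (show ¬ (2*k+4) % 2 = 1 by omega),
      show (2*k+4+1 : ℕ) = 2*k+5 by omega] at d4'
  have C := core m n hmn hn (p (2*k+1)) (p (2*k+2)) (p (2*k+3)) (p (2*k+4))
    (A (2*k+1)) (A (2*k+2)) (A (2*k+3)) (A (2*k+4)) (A (2*k+5))
    q1 q1' q2 q2' q3 q3' q4 q4' r1 r2 r3 r4 d1 d1' d2 d2' d3 d3' d4 d4'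
  rcases Nat.even_or_odd k with ⟨j, hj⟩ | ⟨j, hj⟩
  · -- k even : s = k+1 odd
    have hr : |rOf m A (k+1+2) - rOf m A (k+1)| = |A (2*k+5) - A (2*k+1)| := by
      unfold rOf
      rw [if_pos (show (k+1+2) % 2 = 1 by omega), if_pos (show (k+1) % 2 = 1 by omega),
          show (2*(k+1+2)-1 : ℕ) = 2*k+5 by omega, show (2*(k+1)-1 : ℕ) = 2*k+1 by omega]
    have b0 : barp m n a b (2*(k+1)-1) = n - b := by
      unfold barp; rw [if_pos (show (2*(k+1)-1) % 2 = 1 by omega)]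
    have b1 : barp m n a b (2*(k+1)+1) = n - b := by
      unfold barp; rw [if_pos (show (2*(k+1)+1) % 2 = 1 by omega)]
    have b2 : barp m n a b (2*(k+1)) = m - n - a + b := by
      unfold barp
      rw [if_neg (show ¬ (2*(k+1)) % 2 = 1 by omega),
          if_neg (show ¬ (2*(k+1)) % 4 = 0 by omega)]
    have b3 : barp m n a b (2*(k+1)+2) = a + b := by
      unfold barp
      rw [if_neg (show ¬ (2*(k+1)+2) % 2 = 1 by omega),
          if_pos (show (2*(k+1)+2) % 4 = 0 by omega)]
    have he : eterm m n a b p (k+1) =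
        (h1 m n (p (2*k+3)) (p (2*k+2)) (p (2*k+1)) - n)
        + (h2 m n (p (2*k+4)) (p (2*k+3)) (p (2*k+2)) - m)
        + 2 * (h3 m n (p (2*k+3)) (p (2*k+2)) - n) := by
      unfold eterm
      rw [b0, b1, b2, b3, bar1a m n a b hmn hn ha0 ha1 hb0 hb1,
          bar2a m n a b hmn hn ha0 ha1 hb0 hb1, bar3a m n a b hmn hn ha0 ha1 hb0 hb1,
          show (2*(k+1)+1 : ℕ) = 2*k+3 by omega, show (2*(k+1)+2 : ℕ) = 2*k+4 by omega,
          show (2*(k+1)-1 : ℕ) = 2*k+1 by omega, show (2*(k+1) : ℕ) = 2*k+2 by omega]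
    rw [hr, he]
    linarith [C]
  · -- k odd : s = k+1 even
    have hr : |rOf m A (k+1+2) - rOf m A (k+1)| = |A (2*k+5) - A (2*k+1)| := by
      unfold rOf
      rw [if_neg (show ¬ (k+1+2) % 2 = 1 by omega), if_neg (show ¬ (k+1) % 2 = 1 by omega),
          show (2*(k+1+2)-1 : ℕ) = 2*k+5 by omega, show (2*(k+1)-1 : ℕ) = 2*k+1 by omega,
          show m - A (2*k+5) - (m - A (2*k+1)) = -(A (2*k+5) - A (2*k+1)) by ring, abs_neg]
    have b0 : barp m n a b (2*(k+1)-1) = n - b := by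
      unfold barp; rw [if_pos (show (2*(k+1)-1) % 2 = 1 by omega)]
    have b1 : barp m n a b (2*(k+1)+1) = n - b := by
      unfold barp; rw [if_pos (show (2*(k+1)+1) % 2 = 1 by omega)]
    have b2 : barp m n a b (2*(k+1)) = a + b := by
      unfold barp
      rw [if_neg (show ¬ (2*(k+1)) % 2 = 1 by omega),
          if_pos (show (2*(k+1)) % 4 = 0 by omega)]
    have b3 : barp m n a b (2*(k+1)+2) = m - n - a + b := by
      unfold barp
      rw [if_neg (show ¬ (2*(k+1)+2) % 2 = 1 by omega),
          if_neg (show ¬ (2*(k+1)+2) % 4 = 0 by omega)]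
    have he : eterm m n a b p (k+1) =
        (h1 m n (p (2*k+3)) (p (2*k+2)) (p (2*k+1)) - n)
        + (h2 m n (p (2*k+4)) (p (2*k+3)) (p (2*k+2)) - m)
        + 2 * (h3 m n (p (2*k+3)) (p (2*k+2)) - n) := by
      unfold eterm
      rw [b0, b1, b2, b3, bar1b m n a b hmn hn ha0 ha1 hb0 hb1,
          bar2b m n a b hmn hn ha0 ha1 hb0 hb1, bar3b m n a b hmn hn ha0 ha1 hb0 hb1,
          show (2*(k+1)+1 : ℕ) = 2*k+3 by omega, show (2*(k+1)+2 : ℕ) = 2*k+4 by omega,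
          show (2*(k+1)-1 : ℕ) = 2*k+1 by omega, show (2*(k+1) : ℕ) = 2*k+2 by omega]
    rw [hr, he]
    linarith [C]

theorem stmt2 (m n a b : ℤ) (hmn : n < m) (hn : 1 ≤ n)
    (ha0 : 0 ≤ a) (ha1 : a ≤ m - n) (hb0 : 0 ≤ b) (hb1 : b ≤ n)
    (p A : ℕ → ℤ) (hp : IsPath m n a b p)
    (hA : IsWeightSeq m n a b p A) (hadm : AdmIneq m n p A)
    (H : ℤ) (hH : IsEnergy m n a b p H) :
    ∃ S0 : ℕ, ∀ S ≥ S0,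
      2 * H = ∑ s ∈ Finset.Icc 1 S, (s : ℤ) * |rOf m A (s + 2) - rOf m A s| := by

  obtain ⟨S0, hHs⟩ := hH
  refine ⟨S0, fun S hS => ?_⟩
  rw [hHs S hS]
  have hc : ∀ s ∈ Finset.Icc 1 S,
      (s : ℤ) * |rOf m A (s + 2) - rOf m A s| = (s : ℤ) * (-2 * eterm m n a b p s) := by
    intro s hs
    rw [key m n a b hmn hn ha0 ha1 hb0 hb1 p A hp.1 hA.1 hadm s (Finset.mem_Icc.mp hs).1]
  rw [Finset.sum_congr rfl hc,
      show (∑ s ∈ Finset.Icc 1 S, (s : ℤ) * (-2 * eterm m n a b p s))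
        = -2 * ∑ s ∈ Finset.Icc 1 S, (s : ℤ) * eterm m n a b p s from by
          rw [Finset.mul_sum]; exact Finset.sum_congr rfl fun s _ => by ring]
  ring


end Stmt2
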